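/- Let φ : ℝ₊ → ℝ satisfy φ(t) ≥ 0 for all t > 0 and the Beurling functional equation φ(v + u·φ(v)) = φ(u)·φ(v) for all u, v > 0, and suppose there is δ > 0 such that φ(t) > 1 for all t ∈ (0, δ). Then φ is continuous on ℝ₊, strictly increasing on ℝ₊, and φ(t) > 1 for all t > 0. -/

import Mathlib

theorem bfe_above_one_near_zero_implies_increasing
    (φ : ℝ → ℝ) (δ : ℝ) (hδ : 0 < δ)
    (hnonneg : ∀ t : ℝ, 0 < t → 0 ≤ φ t)
    (hBFE : ∀ u v : ℝ, 0 < u → 0 < v → φ (v + u * φ v) = φ u * φ v)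
    (h1 : ∀ t ∈ Set.Ioo (0 : ℝ) δ, 1 < φ t) :
    ContinuousOn φ (Set.Ioi 0) ∧ StrictMonoOn φ (Set.Ioi 0) ∧
      ∀ t : ℝ, 0 < t → 1 < φ t := by
  -- Step 1: φ > 1 on all of (0, ∞)
  have hpos : ∀ t : ℝ, 0 < t → 1 < φ t := by
    have key : ∀ n : ℕ, ∀ t : ℝ, 0 < t → t < δ + δ * n → 1 < φ t := by
      intro n
      induction n with
      | zero =>
        intro t ht htd
        exact h1 t ⟨ht, by simpa using htd⟩
      | succ n ih =>
        intro t ht htd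
        by_cases hc : t < δ + δ * n
        · exact ih t ht hc
        · push_neg at hc
          have hδn : (0:ℝ) ≤ δ * n := by positivity
          have hta : t - (δ + δ * n) < δ := by push_cast at htd; linarith
          set v := (t - (δ + δ * n) + δ) / 2 with hv
          have hv0 : 0 < v := by
            have : 0 ≤ t - (δ + δ * n) := by linarith
            simp only [hv]; linarith
          have hvδ : v < δ := by simp only [hv]; linarith
          have hφv : 1 < φ v := h1 v ⟨hv0, hvδ⟩
          have hvt : v < t := by linarith
          set u := (t - v) / φ v with hu
          have hu0 : 0 < u := div_pos (by linarith) (by linarith)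
          have hua : u < δ + δ * n := by
            have h1' : u < t - v := by
              rw [hu, div_lt_iff₀ (by linarith)]
              nlinarith
            have h2' : t - v < δ + δ * n := by simp only [hv]; linarith
            linarith
          have ht' : t = v + u * φ v := by
            rw [hu]; field_simp; ring
          have hb := hBFE u v hu0 hv0
          rw [← ht'] at hb
          have h1u := ih u hu0 hua
          nlinarith
    intro t ht
    obtain ⟨n, hn⟩ := exists_nat_gt (t / δ)
    have : t < n * δ := (div_lt_iff₀ hδ).mp hn
    exact key n t ht (by nlinarith)
  -- Step 2: strict monotonicity
  have hmono : StrictMonoOn φ (Set.Ioi 0) := by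
    intro s hs t ht hst
    simp only [Set.mem_Ioi] at hs ht
    have hφs := hpos s hs
    set u := (t - s) / φ s with hu
    have hu0 : 0 < u := div_pos (by linarith) (by linarith)
    have ht' : t = s + u * φ s := by rw [hu]; field_simp; ring
    have hb := hBFE u s hu0 hs
    rw [← ht'] at hb
    have := hpos u hu0
    nlinarith
  -- Step 3: inf of φ near 0 is 1
  have hlim : ∀ ε : ℝ, 0 < ε → ∃ t₀ : ℝ, 0 < t₀ ∧ t₀ < δ ∧ φ t₀ < 1 + ε := by
    set s := φ '' Set.Ioo 0 δ with hs
    have hne : s.Nonempty := ⟨φ (δ / 2), ⟨δ / 2, ⟨by linarith, by linarith⟩, rfl⟩⟩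
    have hbdd : BddBelow s := by
      refine ⟨1, ?_⟩
      rintro x ⟨t, ht, rfl⟩
      exact (h1 t ht).le
    set L := sInf s with hL
    have hL1 : 1 ≤ L := le_csInf hne (by rintro x ⟨t, ht, rfl⟩; exact (h1 t ht).le)
    have hL2 : ∀ t ∈ Set.Ioo (0:ℝ) δ, L ^ 2 ≤ φ t := by
      rintro t ⟨ht0, htδ⟩
      have hv0 : 0 < t / 2 := by linarith
      have hvδ : t / 2 < δ := by linarith
      have hφv := hpos (t / 2) hv0
      set u := (t - t / 2) / φ (t / 2) with hu
      have hu0 : 0 < u := div_pos (by linarith) (by linarith)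
      have huδ : u < δ := by
        have : u < t - t / 2 := by
          rw [hu, div_lt_iff₀ (by linarith)]
          nlinarith
        linarith
      have ht' : t = t / 2 + u * φ (t / 2) := by rw [hu]; field_simp; ring
      have hb := hBFE u (t / 2) hu0 hv0
      rw [← ht'] at hb
      have hLu : L ≤ φ u := csInf_le hbdd ⟨u, ⟨hu0, huδ⟩, rfl⟩
      have hLv : L ≤ φ (t / 2) := csInf_le hbdd ⟨t / 2, ⟨hv0, hvδ⟩, rfl⟩
      nlinarith
    have hLeq : L = 1 := by
      by_contra h
      have hLgt : 1 < L := lt_of_le_of_ne hL1 (Ne.symm h)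
      obtain ⟨x, hxs, hx⟩ := exists_lt_of_csInf_lt hne (show sInf s < L ^ 2 by
        rw [← hL]; nlinarith)
      obtain ⟨t, ht, rfl⟩ := hxs
      exact absurd (hL2 t ht) (not_le.mpr hx)
    intro ε hε
    obtain ⟨x, hxs, hx⟩ := exists_lt_of_csInf_lt hne (show sInf s < L + ε by
      rw [← hL]; linarith)
    obtain ⟨t, ht, rfl⟩ := hxs
    exact ⟨t, ht.1, ht.2, by rw [hLeq] at hx; linarith⟩
  -- Step 4: continuity
  have hcont : ContinuousOn φ (Set.Ioi 0) := by
    intro x hx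
    simp only [Set.mem_Ioi] at hx
    rw [Metric.continuousWithinAt_iff]
    intro ε hε
    have hφx := hpos x hx
    obtain ⟨t₀, ht₀0, ht₀δ, ht₀⟩ := hlim (ε / φ x) (div_pos hε (by linarith))
    have hεx : ε / φ x * φ x = ε := div_mul_cancel₀ ε (by linarith)
    refine ⟨t₀, ht₀0, ?_⟩
    intro y hy hyx
    simp only [Set.mem_Ioi] at hy
    rw [Real.dist_eq] at hyx ⊢
    rw [abs_lt] at hyx
    rcases lt_trichotomy y x with hyx' | hyx' | hyx'
    · -- y < x
      have hφy := hpos y hy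
      set u := (x - y) / φ y with hu
      have hu0 : 0 < u := div_pos (by linarith) (by linarith)
      have hut : u < t₀ := by
        have h1' : u < x - y := by
          rw [hu, div_lt_iff₀ (by linarith)]
          nlinarith
        linarith
      have hx' : x = y + u * φ y := by rw [hu]; field_simp; ring
      have hb := hBFE u y hu0 hy
      rw [← hx'] at hb
      have hφu1 := hpos u hu0
      have hφu2 : φ u < φ t₀ := hmono (Set.mem_Ioi.mpr hu0) (Set.mem_Ioi.mpr ht₀0) hut
      have hφyx : φ y < φ x := hmono (Set.mem_Ioi.mpr hy) (Set.mem_Ioi.mpr hx) hyx'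
      have hkey : φ x - φ y < ε := by nlinarith
      rw [abs_lt]; constructor <;> linarith
    · subst hyx'; simpa using hε
    · -- x < y
      have hφy := hpos y hy
      set u := (y - x) / φ x with hu
      have hu0 : 0 < u := div_pos (by linarith) (by linarith)
      have hut : u < t₀ := by
        have h1' : u < y - x := by
          rw [hu, div_lt_iff₀ (by linarith)]
          nlinarith
        linarith
      have hy' : y = x + u * φ x := by rw [hu]; field_simp; ring
      have hb := hBFE u x hu0 hx
      rw [← hy'] at hb
      have hφu1 := hpos u hu0
      have hφu2 : φ u < φ t₀ := hmono (Set.mem_Ioi.mpr hu0) (Set.mem_Ioi.mpr ht₀0) hut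
      have hφxy : φ x < φ y := hmono (Set.mem_Ioi.mpr hx) (Set.mem_Ioi.mpr hy) hyx'
      have hkey : φ y - φ x < ε := by nlinarith
      rw [abs_lt]; constructor <;> linarith
  exact ⟨hcont, hmono, hpos⟩
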